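/- An integer d̃ ≥ 1 belongs to reg(ℙ(w)(𝔽_q)) if and only if |M̄_{d̃, i}| = q^{m−i} for every i ∈ {0, 1, …, m}. -/

import Mathlib

open MvPolynomial

noncomputable section

/-- `pSum q k = 1 + q + ⋯ + q^(k-1)`; so `p_m = pSum q (m+1)`. -/
def pSum (q k : ℕ) : ℕ := ∑ i ∈ Finset.range k, q ^ i

/-- Equivalence of nonzero vectors under weighted scaling by the algebraic closure. -/
def wRel (F : Type) [Field F] {m : ℕ} (w : Fin (m + 1) → ℕ)
    (x y : {v : Fin (m + 1) → AlgebraicClosure F // v ≠ 0}) : Prop :=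
  ∃ lam : (AlgebraicClosure F)ˣ, ∀ i, y.1 i = (lam : AlgebraicClosure F) ^ w i * x.1 i

/-- The weighted projective space `ℙ(w)` as set of orbits. -/
def PW (F : Type) [Field F] {m : ℕ} (w : Fin (m + 1) → ℕ) : Type :=
  Quot (wRel F w)

def PW.mk (F : Type) [Field F] {m : ℕ} (w : Fin (m + 1) → ℕ)
    (x : {v : Fin (m + 1) → AlgebraicClosure F // v ≠ 0}) : PW F w :=
  Quot.mk _ x

/-- The `𝔽_q`-rational points of `ℙ(w)`: orbits fixed by coordinatewise Frobenius. -/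
def ratPts (F : Type) [Field F] [Fintype F] {m : ℕ} (w : Fin (m + 1) → ℕ) :
    Set (PW F w) :=
  {c | ∃ x : {v : Fin (m + 1) → AlgebraicClosure F // v ≠ 0},
    PW.mk F w x = c ∧
    ∃ h : (fun i => x.1 i ^ Fintype.card F) ≠ (0 : Fin (m + 1) → AlgebraicClosure F),
      PW.mk F w ⟨fun i => x.1 i ^ Fintype.card F, h⟩ = c}

/-- `V_{ℙ(w)}(f)(𝔽_q)`: the rational points at which `f` vanishes. -/
def vanishSet (F : Type) [Field F] [Fintype F] {m : ℕ} (w : Fin (m + 1) → ℕ)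
    (f : MvPolynomial (Fin (m + 1)) F) : Set (PW F w) :=
  {c | c ∈ ratPts F w ∧ ∀ x, PW.mk F w x = c →
    MvPolynomial.eval x.1 (MvPolynomial.map (algebraMap F (AlgebraicClosure F)) f) = 0}

/-- `e_q(d; w)`: the maximal number of rational zeroes of a nonzero
weighted homogeneous polynomial of degree `d`. -/
def eMax (F : Type) [Field F] [Fintype F] {m : ℕ} (w : Fin (m + 1) → ℕ) (d : ℕ) : ℕ :=
  sSup {n | ∃ f : MvPolynomial (Fin (m + 1)) F,
    f ≠ 0 ∧ MvPolynomial.IsWeightedHomogeneous w f d ∧ n = (vanishSet F w f).ncard}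

/-- weighted degree of a monomial (exponent vector). -/
def wdeg {m : ℕ} (w : Fin (m + 1) → ℕ) (a : Fin (m + 1) →₀ ℕ) : ℕ := ∑ i, w i * a i

/-- degree-lexicographic order (weighted degree first, `x_0 < x_1 < ⋯ < x_m`). -/
def dlexLt {m : ℕ} (w : Fin (m + 1) → ℕ) (a b : Fin (m + 1) →₀ ℕ) : Prop :=
  wdeg w a < wdeg w b ∨
    (wdeg w a = wdeg w b ∧ ∃ i, a i < b i ∧ ∀ j, i < j → a j = b j)

/-- `a` is the initial monomial of `f` for the weighted deglex order. -/
def IsInitial (F : Type) [Field F] {m : ℕ} (w : Fin (m + 1) → ℕ)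
    (f : MvPolynomial (Fin (m + 1)) F) (a : Fin (m + 1) →₀ ℕ) : Prop :=
  a ∈ f.support ∧ ∀ b ∈ f.support, b ≠ a → dlexLt w b a

/-- The vanishing ideal `I(ℙ(w)(𝔽_q))`, generated by the homogeneous polynomials
vanishing at every rational point. -/
def vanishingIdeal (F : Type) [Field F] [Fintype F] {m : ℕ} (w : Fin (m + 1) → ℕ) :
    Ideal (MvPolynomial (Fin (m + 1)) F) :=
  Ideal.span {g | (∃ e, MvPolynomial.IsWeightedHomogeneous w g e) ∧
    ∀ c ∈ ratPts F w, ∀ x, PW.mk F w x = c →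
      MvPolynomial.eval x.1 (MvPolynomial.map (algebraMap F (AlgebraicClosure F)) g) = 0}

/-- `M̄`: monomials divisible by no initial monomial of a nonzero homogeneous
element of the vanishing ideal. -/
def Mbar (F : Type) [Field F] [Fintype F] {m : ℕ} (w : Fin (m + 1) → ℕ) :
    Set (Fin (m + 1) →₀ ℕ) :=
  {a | ¬ ∃ g : MvPolynomial (Fin (m + 1)) F, g ≠ 0 ∧ g ∈ vanishingIdeal F w ∧
    (∃ e, MvPolynomial.IsWeightedHomogeneous w g e) ∧ ∃ b, IsInitial F w g b ∧ b ≤ a}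

/-- `M̄_d`. -/
def MbarD (F : Type) [Field F] [Fintype F] {m : ℕ} (w : Fin (m + 1) → ℕ) (d : ℕ) :
    Set (Fin (m + 1) →₀ ℕ) :=
  {a ∈ Mbar F w | wdeg w a = d}

/-- `M̄_{d,i}`. -/
def MbarDI (F : Type) [Field F] [Fintype F] {m : ℕ} (w : Fin (m + 1) → ℕ) (d : ℕ)
    (i : Fin (m + 1)) : Set (Fin (m + 1) →₀ ℕ) :=
  {a ∈ MbarD F w d | (∀ t, t < i → a t = 0) ∧ 1 ≤ a i}

/-- The regularity set `reg(ℙ(w)(𝔽_q)) = {d ≥ 1 : |M̄_d| = p_m}`. -/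
def regSet (F : Type) [Field F] [Fintype F] {m : ℕ} (w : Fin (m + 1) → ℕ) : Set ℕ :=
  {d | 1 ≤ d ∧ (MbarD F w d).ncard = pSum (Fintype.card F) (m + 1)}

/-- Footprint bound at level `dtil`: number of monomials of `M̄_{dtil}` divisible by `a`. -/
def FB (F : Type) [Field F] [Fintype F] {m : ℕ} (w : Fin (m + 1) → ℕ) (dtil : ℕ)
    (a : Fin (m + 1) →₀ ℕ) : ℕ :=
  {b | b ∈ MbarD F w dtil ∧ a ≤ b}.ncard

/-- `FB_i`: number of monomials of `M̄_{dtil, i}` divisible by `a`. -/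
def FBi (F : Type) [Field F] [Fintype F] {m : ℕ} (w : Fin (m + 1) → ℕ) (dtil : ℕ)
    (i : Fin (m + 1)) (a : Fin (m + 1) →₀ ℕ) : ℕ :=
  {b | b ∈ MbarDI F w dtil i ∧ a ≤ b}.ncard

/-- Hilbert function of `𝔽_q[x]/I(ℙ(w)(𝔽_q))` at degree `d`. -/
def hilb (F : Type) [Field F] [Fintype F] {m : ℕ} (w : Fin (m + 1) → ℕ) (d : ℕ) : ℕ :=
  Module.finrank F
    (↥(weightedHomogeneousSubmodule F w d) ⧸
      (Submodule.comap (weightedHomogeneousSubmodule F w d).subtype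
        (Submodule.restrictScalars F (vanishingIdeal F w))))

/-- Denumerant: the number of representations `d = w0*i0 + w1*i1`. -/
def den (w0 w1 d : ℕ) : ℕ := {p : ℕ × ℕ | w0 * p.1 + w1 * p.2 = d}.ncard


namespace Stmt6Aux

open Finset

variable {F : Type} [Field F] [Fintype F] {m : ℕ} {w : Fin (m + 1) → ℕ}

lemma wdeg_eq_weight (w : Fin (m + 1) → ℕ) (a : Fin (m + 1) →₀ ℕ) :
    wdeg w a = Finsupp.weight w a := by
  rw [Finsupp.weight_apply, Finsupp.sum_fintype]
  · simp [wdeg, mul_comm]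
  · intro i; simp

lemma dlexLt_total {a b : Fin (m + 1) →₀ ℕ} (hne : a ≠ b)
    (hdeg : wdeg w a = wdeg w b) : dlexLt w a b ∨ dlexLt w b a := by
  classical
  have hex : ∃ j, a j ≠ b j := by
    by_contra h; push_neg at h; exact hne (Finsupp.ext h)
  set D : Finset (Fin (m + 1)) := Finset.univ.filter (fun j => a j ≠ b j) with hD
  have hDne : D.Nonempty := ⟨hex.choose, by simp [hD, hex.choose_spec]⟩
  set j := D.max' hDne with hj
  have hjD : j ∈ D := D.max'_mem hDne
  have hjne : a j ≠ b j := by simpa [hD] using hjD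
  have hrest : ∀ k, j < k → a k = b k := by
    intro k hk
    by_contra hne'
    have : k ∈ D := by simp [hD, hne']
    exact absurd (D.le_max' k this) (not_le.mpr hk)
  rcases lt_or_gt_of_ne hjne with h | h
  · exact Or.inl (Or.inr ⟨hdeg, j, h, hrest⟩)
  · exact Or.inr (Or.inr ⟨hdeg.symm, j, h, fun k hk => (hrest k hk).symm⟩)

lemma pow_congr_mod {z : F} {n n' : ℕ} (h : n ≡ n' [MOD Fintype.card F - 1])
    (h0 : n = 0 ↔ n' = 0) : z ^ n = z ^ n' := by
  by_cases hz : z = 0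
  · subst hz
    rcases Nat.eq_zero_or_pos n with hn | hn
    · rw [hn, h0.mp hn]
    · have hn' : n' ≠ 0 := fun hh => by omega
      rw [zero_pow (by omega), zero_pow hn']
  · set e := Fintype.card F - 1 with he0
    have he : z ^ e = 1 := FiniteField.pow_card_sub_one_eq_one z hz
    have key : ∀ k : ℕ, z ^ k = z ^ (k % e) := by
      intro k
      conv_lhs => rw [← Nat.div_add_mod k e]
      rw [pow_add, pow_mul, he, one_pow, one_mul]
    rw [key n, key n', h]

end Stmt6Aux
namespace Stmt6Aux2
open Finset Stmt6Aux

set_option linter.unusedSectionVars false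
variable {F : Type} [Field F] [Fintype F] {m : ℕ} {w : Fin (m + 1) → ℕ}

lemma wRel_equiv : Equivalence (wRel F (m := m) w) := by
  constructor
  · intro x; exact ⟨1, fun i => by simp⟩
  · rintro x y ⟨l, hl⟩
    refine ⟨l⁻¹, fun i => ?_⟩
    rw [hl i, ← mul_assoc, ← mul_pow]
    norm_cast
    rw [inv_mul_cancel]  -- l⁻¹ * l = 1 as units? careful
    simp
  · rintro x y z ⟨l, hl⟩ ⟨k, hk⟩
    refine ⟨k * l, fun i => ?_⟩
    rw [hk i, hl i, ← mul_assoc, ← mul_pow]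
    norm_cast

lemma mem_range_of_pow_card (x : AlgebraicClosure F)
    (hx : x ^ Fintype.card F = x) :
    ∃ z : F, algebraMap F (AlgebraicClosure F) z = x := by
  classical
  by_contra hcon
  push_neg at hcon
  have hq1 : 1 < Fintype.card F := Fintype.one_lt_card
  have hPne : (Polynomial.X ^ Fintype.card F - Polynomial.X :
      Polynomial (AlgebraicClosure F)) ≠ 0 :=
    FiniteField.X_pow_card_sub_X_ne_zero (AlgebraicClosure F) hq1
  have hroot : ∀ y ∈ insert x (Finset.univ.image (algebraMap F (AlgebraicClosure F))),
      y ∈ (Polynomial.X ^ Fintype.card F - Polynomial.X :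
        Polynomial (AlgebraicClosure F)).roots := by
    intro y hy
    rw [Polynomial.mem_roots hPne]
    have hyq : y ^ Fintype.card F = y := by
      rcases Finset.mem_insert.mp hy with h | h
      · rw [h]; exact hx
      · obtain ⟨z, _, hz⟩ := Finset.mem_image.mp h
        rw [← hz, ← map_pow, FiniteField.pow_card z]
    simpa [Polynomial.IsRoot, sub_eq_zero] using hyq
  have hsub : insert x (Finset.univ.image (algebraMap F (AlgebraicClosure F)))
      ⊆ (Polynomial.X ^ Fintype.card F - Polynomial.X :
        Polynomial (AlgebraicClosure F)).roots.toFinset :=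
    fun y hy => Multiset.mem_toFinset.mpr (hroot y hy)
  have hcard : (insert x (Finset.univ.image (algebraMap F (AlgebraicClosure F)))).card
      = Fintype.card F + 1 := by
    rw [Finset.card_insert_of_notMem, Finset.card_image_of_injective _
      (RingHom.injective (algebraMap F (AlgebraicClosure F))), Finset.card_univ]
    intro hmem
    obtain ⟨z, _, hz⟩ := Finset.mem_image.mp hmem
    exact hcon z hz
  have hle : (insert x (Finset.univ.image (algebraMap F (AlgebraicClosure F)))).card
      ≤ Fintype.card F := by
    calc _ ≤ (Polynomial.X ^ Fintype.card F - Polynomial.X :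
          Polynomial (AlgebraicClosure F)).roots.toFinset.card := Finset.card_le_card hsub
      _ ≤ Multiset.card (Polynomial.X ^ Fintype.card F - Polynomial.X :
          Polynomial (AlgebraicClosure F)).roots := Multiset.toFinset_card_le _
      _ ≤ _ := Polynomial.card_roots' _
      _ = Fintype.card F :=
          FiniteField.X_pow_card_sub_X_natDegree_eq (AlgebraicClosure F) hq1
  omega

lemma exists_mu (lam : (AlgebraicClosure F)ˣ) :
    ∃ mu : (AlgebraicClosure F)ˣ,
      (mu : AlgebraicClosure F) ^ Fintype.card F * (lam : AlgebraicClosure F)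
        = (mu : AlgebraicClosure F) := by
  have hq1 : 1 < Fintype.card F := Fintype.one_lt_card
  obtain ⟨z, hz⟩ := IsAlgClosed.exists_pow_nat_eq ((lam⁻¹ : (AlgebraicClosure F)ˣ) :
    AlgebraicClosure F) (n := Fintype.card F - 1) (by omega)
  have hzne : z ≠ 0 := by
    intro h
    rw [h, zero_pow (by omega : Fintype.card F - 1 ≠ 0)] at hz
    exact (Units.ne_zero lam⁻¹) hz.symm
  refine ⟨Units.mk0 z hzne, ?_⟩
  have : z ^ Fintype.card F = z ^ (Fintype.card F - 1) * z := by
    rw [← pow_succ]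
    congr 1
    omega
  rw [Units.val_mk0, this, hz]
  have : ((lam⁻¹ : (AlgebraicClosure F)ˣ) : AlgebraicClosure F) * z * lam
      = z * (((lam⁻¹ * lam : (AlgebraicClosure F)ˣ)) : AlgebraicClosure F) := by
    push_cast; ring
  rw [this, inv_mul_cancel]
  simp

lemma eval_scaled {S : Type*} [CommRing S] {g : MvPolynomial (Fin (m + 1)) S} {e' : ℕ}
    (hg : g.IsWeightedHomogeneous w e') (t : S) (y : Fin (m + 1) → S) :
    MvPolynomial.eval (fun i => t ^ w i * y i) g = t ^ e' * MvPolynomial.eval y g := by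
  rw [MvPolynomial.eval_eq', MvPolynomial.eval_eq', Finset.mul_sum]
  apply Finset.sum_congr rfl
  intro d hd
  have hw : ∑ i, w i * d i = e' := by
    have h1 := hg (MvPolynomial.mem_support_iff.mp hd)
    rw [← wdeg_eq_weight] at h1
    exact h1
  have : ∏ i, (t ^ w i * y i) ^ d i = t ^ e' * ∏ i, y i ^ d i := by
    rw [← hw]
    simp_rw [mul_pow, ← pow_mul]
    rw [Finset.prod_mul_distrib, Finset.prod_pow_eq_pow_sum]
  rw [this]; ring

end Stmt6Aux2
namespace Stmt6Aux3
open Finset Stmt6Aux Stmt6Aux2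
set_option linter.unusedSectionVars false

variable {F : Type} [Field F] [Fintype F] {m : ℕ} {w : Fin (m + 1) → ℕ}

lemma isWeightedHomogeneous_map {g : MvPolynomial (Fin (m + 1)) F} {e' : ℕ}
    (hg : g.IsWeightedHomogeneous w e') :
    (MvPolynomial.map (algebraMap F (AlgebraicClosure F)) g).IsWeightedHomogeneous w e' := by
  intro d hd
  rw [MvPolynomial.coeff_map] at hd
  exact hg fun h => hd (by rw [h, map_zero])

lemma mem_vanishingIdeal {g : MvPolynomial (Fin (m + 1)) F} {e' : ℕ}
    (hg : g.IsWeightedHomogeneous w e')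
    (hv : ∀ z : Fin (m + 1) → F, MvPolynomial.eval z g = 0) :
    g ∈ vanishingIdeal F w := by
  apply Ideal.subset_span
  refine ⟨⟨e', hg⟩, ?_⟩
  rintro c ⟨x₀, hx₀, hne, hx₀q⟩ x hx
  have h1 : PW.mk F w x₀ = PW.mk F w ⟨fun i => x₀.1 i ^ Fintype.card F, hne⟩ :=
    hx₀.trans hx₀q.symm
  obtain ⟨lam, hlam0⟩ := (wRel_equiv (F := F) (w := w)).eqvGen_iff.mp (Quot.eqvGen_exact h1)
  have hlam : ∀ i, x₀.1 i ^ Fintype.card F = (lam : AlgebraicClosure F) ^ w i * x₀.1 i :=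
    fun i => hlam0 i
  obtain ⟨mu, hmu⟩ := exists_mu (F := F) lam
  have hyq : ∀ i, ((mu : AlgebraicClosure F) ^ w i * x₀.1 i) ^ Fintype.card F
      = (mu : AlgebraicClosure F) ^ w i * x₀.1 i := by
    intro i
    rw [mul_pow, ← pow_mul, mul_comm (w i) (Fintype.card F), pow_mul, hlam i,
      ← mul_assoc, ← mul_pow, hmu]
  choose z hz using fun i => mem_range_of_pow_card (F := F) _ (hyq i)
  obtain ⟨nu, hnu⟩ := (wRel_equiv (F := F) (w := w)).eqvGen_iff.mp
    (Quot.eqvGen_exact (hx₀.trans hx.symm))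
  have hxy : ∀ i, x.1 i = ((nu * mu⁻¹ : (AlgebraicClosure F)ˣ) : AlgebraicClosure F) ^ w i
      * algebraMap F (AlgebraicClosure F) (z i) := by
    intro i
    rw [hz i, hnu i]
    have : ((nu * mu⁻¹ : (AlgebraicClosure F)ˣ) : AlgebraicClosure F) ^ w i
        * ((mu : AlgebraicClosure F) ^ w i * x₀.1 i)
        = (((nu * mu⁻¹) * mu : (AlgebraicClosure F)ˣ) : AlgebraicClosure F) ^ w i * x₀.1 i := by
      push_cast
      ring
    rw [this, mul_assoc, inv_mul_cancel, mul_one]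
  have hg' := isWeightedHomogeneous_map (w := w) hg
  have hx1 : x.1 = fun i => ((nu * mu⁻¹ : (AlgebraicClosure F)ˣ) : AlgebraicClosure F) ^ w i
      * algebraMap F (AlgebraicClosure F) (z i) := funext hxy
  have h3 : ∀ p : MvPolynomial (Fin (m + 1)) F,
      MvPolynomial.eval (fun i => algebraMap F (AlgebraicClosure F) (z i))
        (MvPolynomial.map (algebraMap F (AlgebraicClosure F)) p)
      = algebraMap F (AlgebraicClosure F) (MvPolynomial.eval z p) := by
    intro p
    induction p using MvPolynomial.induction_on with
    | C a => simp
    | add p q hp hq => simp [hp, hq]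
    | mul_X p n hp => simp [hp]
  rw [hx1, eval_scaled hg', h3 g, hv z, map_zero, mul_zero]

end Stmt6Aux3
namespace Stmt6Aux4
open Finset Stmt6Aux Stmt6Aux2 Stmt6Aux3
set_option linter.unusedSectionVars false

variable {F : Type} [Field F] [Fintype F] {m : ℕ} {w : Fin (m + 1) → ℕ}

lemma exclude {a a' : Fin (m + 1) →₀ ℕ} (hM : a ∈ Mbar F w)
    (hlt : dlexLt w a' a) (hne : a' ≠ a) (hdeg : wdeg w a = wdeg w a')
    (hcong : ∀ j, a j ≡ a' j [MOD Fintype.card F - 1] ∧ (a j = 0 ↔ a' j = 0)) :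
    False := by
  classical
  set f : MvPolynomial (Fin (m + 1)) F :=
    MvPolynomial.monomial a 1 - MvPolynomial.monomial a' 1 with hf
  have hca : MvPolynomial.coeff a f = 1 := by
    rw [hf, MvPolynomial.coeff_sub, MvPolynomial.coeff_monomial, MvPolynomial.coeff_monomial,
      if_pos rfl, if_neg hne, sub_zero]
  have hsupp : ∀ c, MvPolynomial.coeff c f ≠ 0 → c = a ∨ c = a' := by
    intro c hc
    by_contra hcon
    push_neg at hcon
    rw [hf, MvPolynomial.coeff_sub, MvPolynomial.coeff_monomial, MvPolynomial.coeff_monomial,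
      if_neg (fun h => hcon.1 h.symm), if_neg (fun h => hcon.2 h.symm), sub_zero] at hc
    exact hc rfl
  have hf0 : f ≠ 0 := fun h => by
    rw [h, MvPolynomial.coeff_zero] at hca
    exact one_ne_zero hca.symm
  have hhom : f.IsWeightedHomogeneous w (wdeg w a) := by
    intro c hc
    rcases hsupp c hc with rfl | rfl
    · exact (wdeg_eq_weight w c).symm
    · rw [← wdeg_eq_weight, ← hdeg]
  have hvan : ∀ z : Fin (m + 1) → F, MvPolynomial.eval z f = 0 := by
    intro z
    rw [hf, map_sub, MvPolynomial.eval_monomial, MvPolynomial.eval_monomial, one_mul, one_mul,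
      sub_eq_zero]
    rw [Finsupp.prod_fintype _ _ (fun i => pow_zero (z i)),
      Finsupp.prod_fintype _ _ (fun i => pow_zero (z i))]
    exact Finset.prod_congr rfl fun j _ => pow_congr_mod (hcong j).1 (hcong j).2
  have hinit : IsInitial F w f a := by
    constructor
    · rw [MvPolynomial.mem_support_iff, hca]; exact one_ne_zero
    · intro b hb hbne
      rcases hsupp b (MvPolynomial.mem_support_iff.mp hb) with rfl | rfl
      · exact absurd rfl hbne
      · exact hlt
  exact hM ⟨f, hf0, mem_vanishingIdeal hhom hvan, ⟨wdeg w a, hhom⟩, a, hinit, le_refl a⟩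

lemma not_both_mem {d : ℕ} {i : Fin (m + 1)} {a a' : Fin (m + 1) →₀ ℕ}
    (ha : a ∈ MbarDI F w d i) (ha' : a' ∈ MbarDI F w d i) (hne : a ≠ a')
    (hcong : ∀ j, a j ≡ a' j [MOD Fintype.card F - 1] ∧ (a j = 0 ↔ a' j = 0)) :
    False := by
  have hMa : a ∈ Mbar F w := ha.1.1
  have hMa' : a' ∈ Mbar F w := ha'.1.1
  have hda : wdeg w a = d := ha.1.2
  have hda' : wdeg w a' = d := ha'.1.2
  rcases dlexLt_total hne (hda.trans hda'.symm) with h | h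
  · exact exclude hMa' h hne (hda'.trans hda.symm)
      (fun j => ⟨(hcong j).1.symm, (hcong j).2.symm⟩)
  · exact exclude hMa h (fun hh => hne hh.symm) (hda.trans hda'.symm) hcong

end Stmt6Aux4
namespace Stmt6NT
open Finset

/-- Bezout for Finset gcd over ℕ, with ℤ coefficients. -/
lemma finset_gcd_bezout {ι : Type*} [DecidableEq ι] (S : Finset ι) (v : ι → ℕ) :
    ∃ c : ι → ℤ, ((S.gcd v : ℕ) : ℤ) = ∑ j ∈ S, c j * (v j : ℤ) := by
  classical
  induction S using Finset.induction_on with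
  | empty => exact ⟨0, by simp⟩
  | insert b s ha ih =>
    obtain ⟨c, hc⟩ := ih
    refine ⟨fun j => if j = b then Int.gcdA ((v b : ℕ) : ℤ) ((s.gcd v : ℕ) : ℤ)
      else Int.gcdB ((v b : ℕ) : ℤ) ((s.gcd v : ℕ) : ℤ) * c j, ?_⟩
    have h1 : ((insert b s).gcd v : ℕ) = Nat.gcd (v b) (s.gcd v) := by
      rw [Finset.gcd_insert]; rfl
    have h2 : ((Nat.gcd (v b) (s.gcd v) : ℕ) : ℤ)
        = (v b : ℤ) * Int.gcdA ((v b : ℕ) : ℤ) ((s.gcd v : ℕ) : ℤ)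
          + ((s.gcd v : ℕ) : ℤ) * Int.gcdB ((v b : ℕ) : ℤ) ((s.gcd v : ℕ) : ℤ) := by
      have := Int.gcd_eq_gcd_ab ((v b : ℕ) : ℤ) ((s.gcd v : ℕ) : ℤ)
      rwa [Int.gcd_natCast_natCast] at this
    rw [h1, h2, Finset.sum_insert ha]
    beta_reduce
    rw [if_pos rfl]
    have h3 : ∑ j ∈ s, (if j = b then Int.gcdA ((v b : ℕ) : ℤ) ((s.gcd v : ℕ) : ℤ)
        else Int.gcdB ((v b : ℕ) : ℤ) ((s.gcd v : ℕ) : ℤ) * c j) * (v j : ℤ)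
        = Int.gcdB ((v b : ℕ) : ℤ) ((s.gcd v : ℕ) : ℤ) * ∑ j ∈ s, c j * (v j : ℤ) := by
      rw [Finset.mul_sum]
      apply Finset.sum_congr rfl
      intro j hj
      rw [if_neg (by rintro rfl; exact ha hj)]
      ring
    rw [h3, ← hc]
    ring

/-- Key gcd identity: `e / gcd e x₀ = G / gcd G γ` where `G = gcd u (e*γ)`, `x₀ = e*γ/G`. -/
lemma key_gcd_eq {u e γ : ℕ} (hu : 1 ≤ u) (he : 1 ≤ e) :
    e / Nat.gcd e (e * γ / Nat.gcd u (e * γ))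
      = Nat.gcd u (e * γ) / Nat.gcd (Nat.gcd u (e * γ)) γ := by
  have hGpos : 0 < Nat.gcd u (e * γ) := Nat.gcd_pos_of_pos_left _ hu
  have hGdvd : Nat.gcd u (e * γ) ∣ e * γ := Nat.gcd_dvd_right _ _
  have hGx : Nat.gcd u (e * γ) * (e * γ / Nat.gcd u (e * γ)) = e * γ :=
    Nat.mul_div_cancel' hGdvd
  have hM : e * Nat.gcd (Nat.gcd u (e * γ)) γ
      = Nat.gcd u (e * γ) * Nat.gcd e (e * γ / Nat.gcd u (e * γ)) := by
    have h1 := Nat.gcd_mul_left e (Nat.gcd u (e * γ)) γ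
    have h2 := Nat.gcd_mul_left (Nat.gcd u (e * γ)) e (e * γ / Nat.gcd u (e * γ))
    rw [hGx] at h2
    rw [← h1, ← h2, Nat.mul_comm e (Nat.gcd u (e * γ))]
  have hp1 : 0 < Nat.gcd e (e * γ / Nat.gcd u (e * γ)) := Nat.gcd_pos_of_pos_left _ he
  have hp2 : 0 < Nat.gcd (Nat.gcd u (e * γ)) γ := Nat.gcd_pos_of_pos_left _ hGpos
  have hd1 : Nat.gcd e (e * γ / Nat.gcd u (e * γ)) ∣ e := Nat.gcd_dvd_left _ _
  have hd2 : Nat.gcd (Nat.gcd u (e * γ)) γ ∣ Nat.gcd u (e * γ) := Nat.gcd_dvd_left _ _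
  obtain ⟨r, hr⟩ := hd2
  have he' : e = Nat.gcd e (e * γ / Nat.gcd u (e * γ)) * r := by
    have hB := hp2
    apply Nat.eq_of_mul_eq_mul_left hB
    calc Nat.gcd (Nat.gcd u (e * γ)) γ * e
        = e * Nat.gcd (Nat.gcd u (e * γ)) γ := by ring
      _ = Nat.gcd u (e * γ) * Nat.gcd e (e * γ / Nat.gcd u (e * γ)) := hM
      _ = (Nat.gcd (Nat.gcd u (e * γ)) γ * r) * Nat.gcd e (e * γ / Nat.gcd u (e * γ)) := by
          rw [← hr]
      _ = Nat.gcd (Nat.gcd u (e * γ)) γ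
          * (Nat.gcd e (e * γ / Nat.gcd u (e * γ)) * r) := by ring
  calc e / Nat.gcd e (e * γ / Nat.gcd u (e * γ))
      = Nat.gcd e (e * γ / Nat.gcd u (e * γ)) * r
        / Nat.gcd e (e * γ / Nat.gcd u (e * γ)) := by rw [← he']
    _ = r := Nat.mul_div_cancel_left _ hp1
    _ = Nat.gcd (Nat.gcd u (e * γ)) γ * r / Nat.gcd (Nat.gcd u (e * γ)) γ :=
        (Nat.mul_div_cancel_left _ hp2).symm
    _ = _ := by rw [← hr]

/-- The delta lemma. -/
lemma delta_dvd {u e γ : ℕ} (hu : 1 ≤ u) {Δ K : ℤ}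
    (h : (u : ℤ) * Δ = (e : ℤ) * K) (hγ : (γ : ℤ) ∣ K) :
    ((e * γ / Nat.gcd u (e * γ) : ℕ) : ℤ) ∣ Δ := by
  have hune : (u : ℤ) ≠ 0 := Int.natCast_ne_zero.mpr (by omega)
  rcases Nat.eq_zero_or_pos γ with h0 | hγpos
  · subst h0
    obtain ⟨t, ht⟩ := hγ
    rw [Nat.cast_zero, zero_mul] at ht
    rw [ht, mul_zero] at h
    have : Δ = 0 := (mul_eq_zero.mp h).resolve_left hune
    simp [this]
  · have hGpos : 0 < Nat.gcd u (e * γ) := Nat.gcd_pos_of_pos_left _ hu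
    have hGu : Nat.gcd u (e * γ) ∣ u := Nat.gcd_dvd_left _ _
    have hGeγ : Nat.gcd u (e * γ) ∣ e * γ := Nat.gcd_dvd_right _ _
    obtain ⟨t, ht⟩ := hγ
    have h2 : (u : ℤ) * Δ = ((e * γ : ℕ) : ℤ) * t := by
      rw [h, ht]; push_cast; ring
    obtain ⟨u', hu'⟩ := hGu
    obtain ⟨x₀', hx₀'⟩ := hGeγ
    have e1 : u / Nat.gcd u (e * γ) = u' := Nat.div_eq_of_eq_mul_right hGpos hu'
    have e2 : e * γ / Nat.gcd u (e * γ) = x₀' := Nat.div_eq_of_eq_mul_right hGpos hx₀'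
    have h3 : (u' : ℤ) * Δ = (x₀' : ℤ) * t := by
      have hGne : ((Nat.gcd u (e * γ) : ℕ) : ℤ) ≠ 0 := Int.natCast_ne_zero.mpr hGpos.ne'
      apply mul_left_cancel₀ hGne
      calc ((Nat.gcd u (e * γ) : ℕ) : ℤ) * ((u' : ℤ) * Δ)
          = ((Nat.gcd u (e * γ) * u' : ℕ) : ℤ) * Δ := by push_cast; ring
        _ = (u : ℤ) * Δ := by rw [← hu']
        _ = ((e * γ : ℕ) : ℤ) * t := h2
        _ = ((Nat.gcd u (e * γ) * x₀' : ℕ) : ℤ) * t := by rw [← hx₀']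
        _ = ((Nat.gcd u (e * γ) : ℕ) : ℤ) * ((x₀' : ℤ) * t) := by push_cast; ring
    have hcop : Nat.Coprime u' x₀' := by
      have hc := Nat.coprime_div_gcd_div_gcd (m := u) (n := e * γ) hGpos
      rwa [e1, e2] at hc
    have hu'pos : 0 < u' := by
      rcases Nat.eq_zero_or_pos u' with hh | hh
      · rw [hh, Nat.mul_zero] at hu'; omega
      · exact hh
    have hdvdt : (u' : ℤ) ∣ t := by
      have hic : IsCoprime (u' : ℤ) (x₀' : ℤ) := Int.isCoprime_iff_gcd_eq_one.mpr (by
        rw [Int.gcd_natCast_natCast]; exact hcop)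
      exact hic.dvd_of_dvd_mul_left ⟨Δ, h3.symm⟩
    obtain ⟨s, hs⟩ := hdvdt
    rw [e2]
    refine ⟨s, ?_⟩
    have hu'ne : (u' : ℤ) ≠ 0 := Int.natCast_ne_zero.mpr hu'pos.ne'
    apply mul_left_cancel₀ hu'ne
    rw [h3, hs]
    ring

end Stmt6NT
namespace Stmt6Count
open Finset Stmt6NT

variable {F : Type} [Field F] [Fintype F] {m : ℕ} {w : Fin (m + 1) → ℕ}

set_option linter.unusedSectionVars false
set_option maxHeartbeats 1000000

/-- Per-stratum bound. -/
lemma perS_bound (hpos : ∀ j, 1 ≤ w j) {d : ℕ} {i : Fin (m + 1)} {e : ℕ} (hee : 1 ≤ e)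
    (S : Finset (Fin (m + 1)))
    (B : Finset (ZMod e × (Fin (m + 1) → Option (ZMod e))))
    (hB : ∀ P ∈ B, ∃ a : Fin (m + 1) →₀ ℕ,
      wdeg w a = d ∧ (∀ t : Fin (m + 1), t < i → a t = 0) ∧
      P.1 = ((a i : ℕ) : ZMod e) ∧
      (∀ j : Fin (m + 1), P.2 j = if i < j ∧ a j ≠ 0 then some ((a j : ℕ) : ZMod e) else none) ∧
      (∀ j : Fin (m + 1), j ∈ S ↔ (i < j ∧ a j ≠ 0))) :
    B.card ≤ e ^ S.card := by
  classical
  haveI : NeZero e := ⟨by omega⟩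
  -- abbreviations
  set u : ℕ := w i with hu
  have hu1 : 1 ≤ u := hpos i
  set γ : ℕ := S.gcd (fun j => w j) with hγ
  set G : ℕ := Nat.gcd u (e * γ) with hG
  have hGpos : 0 < G := Nat.gcd_pos_of_pos_left _ hu1
  set x₀ : ℕ := e * γ / G with hx₀
  -- degree split for witnesses
  have hdegsplit : ∀ (a : Fin (m + 1) →₀ ℕ), (∀ t : Fin (m + 1), t < i → a t = 0) →
      (∀ j : Fin (m + 1), j ∈ S ↔ (i < j ∧ a j ≠ 0)) →
      wdeg w a = u * a i + ∑ j ∈ S, w j * a j := by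
    intro a hlow hsupp
    have hiS : i ∉ S := fun h => absurd ((hsupp i).mp h).1 (lt_irrefl i)
    have hsub : insert i S ⊆ Finset.univ := Finset.subset_univ _
    have hzero : ∀ t ∈ Finset.univ, t ∉ insert i S → w t * a t = 0 := by
      intro t _ ht
      rw [Finset.mem_insert] at ht
      push_neg at ht
      rcases lt_trichotomy t i with h | h | h
      · rw [hlow t h, Nat.mul_zero]
      · exact absurd h ht.1
      · have : a t = 0 := by
          by_contra hne
          exact ht.2 ((hsupp t).mpr ⟨h, hne⟩)
        rw [this, Nat.mul_zero]
    rw [wdeg, ← Finset.sum_subset hsub hzero, Finset.sum_insert hiS]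
  -- the homomorphism φ
  have hψ0 : ∀ j : Fin (m + 1), j ∈ S →
      ((AddMonoidHom.mulRight ((w j : ℕ) : ZMod G)).comp (Int.castAddHom (ZMod G))) (e : ℤ)
        = 0 := by
    intro j hj
    have hγj : γ ∣ w j := Finset.gcd_dvd hj
    have : G ∣ e * w j := dvd_trans (Nat.gcd_dvd_right _ _) (mul_dvd_mul_left e hγj)
    simp only [AddMonoidHom.comp_apply, Int.coe_castAddHom, AddMonoidHom.coe_mulRight]
    rw [Int.cast_natCast]
    rw [show ((e : ℕ) : ZMod G) * ((w j : ℕ) : ZMod G) = ((e * w j : ℕ) : ZMod G) by push_cast; ring]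
    exact (ZMod.natCast_eq_zero_iff _ _).mpr this
  set ψ : (j : {x // x ∈ S}) → (ZMod e →+ ZMod G) := fun j =>
    ZMod.lift e ⟨(AddMonoidHom.mulRight ((w j.1 : ℕ) : ZMod G)).comp (Int.castAddHom (ZMod G)),
      hψ0 j.1 j.2⟩ with hψ
  have hψ_int : ∀ (j : {x // x ∈ S}) (t : ℤ), ψ j ((t : ℤ) : ZMod e) = ((t * w j.1 : ℤ) : ZMod G) := by
    intro j t
    rw [hψ]
    rw [ZMod.lift_coe]
    simp only [AddMonoidHom.comp_apply, Int.coe_castAddHom, AddMonoidHom.coe_mulRight]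
    push_cast
    ring
  have hψ_nat : ∀ (j : {x // x ∈ S}) (n : ℕ), ψ j ((n : ℕ) : ZMod e) = ((n * w j.1 : ℕ) : ZMod G) := by
    intro j n
    have h1 : ((n : ℕ) : ZMod e) = ((n : ℤ) : ZMod e) := by push_cast; rfl
    rw [h1, hψ_int]
    push_cast
    ring
  set φ : ({x // x ∈ S} → ZMod e) →+ ZMod G :=
    ∑ j : {x // x ∈ S}, (ψ j).comp (Pi.evalAddMonoidHom (fun _ => ZMod e) j) with hφ
  have hφ_apply : ∀ β : {x // x ∈ S} → ZMod e, φ β = ∑ j : {x // x ∈ S}, ψ j (β j) := by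
    intro β
    rw [hφ, AddMonoidHom.finset_sum_apply]
    rfl
  -- range of φ is zmultiples of γ
  have hrange : φ.range = AddSubgroup.zmultiples ((γ : ℕ) : ZMod G) := by
    apply le_antisymm
    · rintro x ⟨β, rfl⟩
      rw [hφ_apply]
      apply AddSubgroup.sum_mem
      intro j _
      obtain ⟨n, hn⟩ := ZMod.natCast_zmod_surjective (n := e) (β j)
      rw [← hn, hψ_nat]
      have hγj : γ ∣ w j.1 := Finset.gcd_dvd j.2
      rw [AddSubgroup.mem_zmultiples_iff]
      refine ⟨(n : ℤ) * (w j.1 / γ : ℕ), ?_⟩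
      rw [zsmul_eq_mul]
      rcases Nat.eq_zero_or_pos γ with h0 | hγpos
      · have : w j.1 = 0 := by
          have := hγj; rw [h0] at this; exact Nat.eq_zero_of_zero_dvd this
        exact absurd this (by have := hpos j.1; omega)
      · have hwj : (w j.1 / γ) * γ = w j.1 := Nat.div_mul_cancel hγj
        have h2 : (n : ℤ) * ((w j.1 / γ : ℕ) : ℤ) * ((γ : ℕ) : ℤ) = ((n * w j.1 : ℕ) : ℤ) := by
          rw [mul_assoc, ← Nat.cast_mul, hwj, ← Nat.cast_mul]
        calc (((n : ℤ) * ((w j.1 / γ : ℕ) : ℤ) : ℤ) : ZMod G) * ((γ : ℕ) : ZMod G)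
            = (((n : ℤ) * ((w j.1 / γ : ℕ) : ℤ) * ((γ : ℕ) : ℤ) : ℤ) : ZMod G) := by
              push_cast; ring
          _ = (((n * w j.1 : ℕ) : ℤ) : ZMod G) := by rw [h2]
          _ = ((n * w j.1 : ℕ) : ZMod G) := by push_cast; rfl
    · rw [AddSubgroup.zmultiples_le]
      obtain ⟨c, hc⟩ := finset_gcd_bezout S (fun j => w j)
      refine ⟨fun j => ((c j.1 : ℤ) : ZMod e), ?_⟩
      rw [hφ_apply]
      have : ∀ j : {x // x ∈ S}, ψ j ((c j.1 : ℤ) : ZMod e) = ((c j.1 * w j.1 : ℤ) : ZMod G) :=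
        fun j => hψ_int j (c j.1)
      rw [Finset.sum_congr rfl (fun j _ => this j)]
      rw [← Int.cast_sum]
      rw [Finset.sum_coe_sort S (fun j => c j * (w j : ℤ))]
      rw [← hc]
      push_cast
      rfl
  -- cardinalities
  have hcardD : Fintype.card ({x // x ∈ S} → ZMod e) = e ^ S.card := by
    rw [Fintype.card_fun, ZMod.card, Fintype.card_coe]
  have hlagrange : Nat.card φ.ker * Nat.card φ.range = e ^ S.card := by
    have h1 := AddSubgroup.card_eq_card_quotient_mul_card_addSubgroup φ.ker
    have h2 : Nat.card (({x // x ∈ S} → ZMod e) ⧸ φ.ker) = Nat.card φ.range :=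
      Nat.card_congr (QuotientAddGroup.quotientKerEquivRange φ).toEquiv
    rw [h2] at h1
    rw [mul_comm, ← h1, Nat.card_eq_fintype_card, hcardD]
  have hrangecard : Nat.card φ.range = e / Nat.gcd e x₀ := by
    rw [hrange, Nat.card_zmultiples, ZMod.addOrderOf_coe γ (by omega : G ≠ 0), hx₀, hG, hu]
    exact (key_gcd_eq hu1 hee).symm
  -- the subgroup H
  have hHcard : Nat.card (AddSubgroup.zmultiples ((x₀ : ℕ) : ZMod e))
      = Nat.card φ.range := by
    rw [Nat.card_zmultiples, ZMod.addOrderOf_coe x₀ (by omega : e ≠ 0), hrangecard]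
  -- projection to tail residues
  set proj : (ZMod e × (Fin (m + 1) → Option (ZMod e))) → ({x // x ∈ S} → ZMod e) :=
    fun P j => (P.2 j.1).getD 0 with hproj
  have hproj_eq : ∀ P ∈ B, ∀ a : Fin (m + 1) →₀ ℕ,
      (∀ j : Fin (m + 1), P.2 j = if i < j ∧ a j ≠ 0 then some ((a j : ℕ) : ZMod e) else none) →
      (∀ j : Fin (m + 1), j ∈ S ↔ (i < j ∧ a j ≠ 0)) →
      ∀ j : {x // x ∈ S}, proj P j = ((a j.1 : ℕ) : ZMod e) := by
    intro P _ a hopt hSiff j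
    have h1 := (hSiff j.1).mp j.2
    show (P.2 j.1).getD 0 = _
    rw [hopt j.1, if_pos h1]
    rfl
  -- φ is constant (= d) on the image of B
  have hkey1 : ∀ P ∈ B, φ (proj P) = ((d : ℕ) : ZMod G) := by
    intro P hP
    obtain ⟨a, hwdeg, hlow, hhead, hopt, hSiff⟩ := hB P hP
    rw [hφ_apply]
    rw [Finset.sum_congr rfl (fun j _ => by
      rw [hproj_eq P hP a hopt hSiff j, hψ_nat])]
    rw [← Nat.cast_sum]
    rw [Finset.sum_coe_sort S (fun j => a j * w j)]
    have hd : d = u * a i + ∑ j ∈ S, w j * a j := by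
      rw [← hwdeg]; exact hdegsplit a hlow hSiff
    have hcomm : ((∑ j ∈ S, a j * w j : ℕ) : ZMod G) = ((∑ j ∈ S, w j * a j : ℕ) : ZMod G) := by
      congr 1
      exact Finset.sum_congr rfl (fun j _ => Nat.mul_comm _ _)
    have hzero : ((u * a i : ℕ) : ZMod G) = 0 := by
      apply (ZMod.natCast_eq_zero_iff _ _).mpr
      exact dvd_trans (Nat.gcd_dvd_left _ _) (Dvd.intro _ rfl)
    rw [hcomm, hd, Nat.cast_add, hzero, zero_add]
  -- the image of B is contained in a φ-fiber
  have himg : (B.image proj).card * Nat.card φ.range ≤ e ^ S.card := by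
    have hsub : B.image proj ⊆ Finset.univ.filter (fun β => φ β = ((d : ℕ) : ZMod G)) := by
      intro β hβ
      obtain ⟨P, hP, rfl⟩ := Finset.mem_image.mp hβ
      simp only [Finset.mem_filter, Finset.mem_univ, true_and]
      exact hkey1 P hP
    rcases Finset.eq_empty_or_nonempty (B.image proj) with hemp | ⟨β₀, hβ₀⟩
    · rw [hemp]; simp
    · have hβ₀f : φ β₀ = ((d : ℕ) : ZMod G) := by
        have := hsub hβ₀
        simpa using this
      have h1 : (B.image proj).card ≤ (Finset.univ.filter (fun β => φ β = 0)).card := by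
        apply Finset.card_le_card_of_injOn (fun β => β - β₀)
        · intro β hβ
          have hf := hsub hβ
          simp only [Finset.mem_coe, Finset.mem_filter, Finset.mem_univ, true_and] at hf ⊢
          rw [map_sub, hf, hβ₀f, sub_self]
        · intro β1 _ β2 _ h
          exact sub_left_injective h
      have h2 : (Finset.univ.filter (fun β => φ β = 0)).card = Nat.card φ.ker := by
        rw [Nat.card_eq_fintype_card]
        have hcongr : Fintype.card φ.ker = Fintype.card {β // φ β = 0} :=
          Fintype.card_congr (Equiv.subtypeEquivRight (fun β => AddMonoidHom.mem_ker))
        rw [hcongr, Fintype.card_subtype]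
      calc (B.image proj).card * Nat.card φ.range
          ≤ Nat.card φ.ker * Nat.card φ.range :=
            Nat.mul_le_mul_right _ (h1.trans_eq h2)
        _ = e ^ S.card := hlagrange
  -- each fiber of proj has at most |H| elements
  have hHfin : ((AddSubgroup.zmultiples ((x₀ : ℕ) : ZMod e) : Set (ZMod e))).Finite :=
    Set.toFinite _
  have hHc2 : hHfin.toFinset.card = Nat.card (AddSubgroup.zmultiples ((x₀ : ℕ) : ZMod e)) := by
    rw [← Set.ncard_eq_toFinset_card _ hHfin, ← Nat.card_coe_set_eq, SetLike.coe_sort_coe]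
  have hfiberbound : ∀ β, (B.filter (fun P => proj P = β)).card
      ≤ Nat.card (AddSubgroup.zmultiples ((x₀ : ℕ) : ZMod e)) := by
    intro β
    rcases Finset.eq_empty_or_nonempty (B.filter (fun P => proj P = β)) with hemp | ⟨P₀, hP₀⟩
    · rw [hemp]; simp
    · have hP₀B : P₀ ∈ B := (Finset.mem_filter.mp hP₀).1
      have hP₀β : proj P₀ = β := (Finset.mem_filter.mp hP₀).2
      obtain ⟨a', hwdeg', hlow', hhead', hopt', hSiff'⟩ := hB P₀ hP₀B
      rw [← hHc2]
      apply Finset.card_le_card_of_injOn (fun P => P.1 - P₀.1)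
      · -- maps into H
        intro P hP
        have hPB : P ∈ B := (Finset.mem_filter.mp hP).1
        have hPβ : proj P = β := (Finset.mem_filter.mp hP).2
        obtain ⟨a, hwdeg, hlow, hhead, hopt, hSiff⟩ := hB P hPB
        -- congruences on S
        have hcongS : ∀ j ∈ S, ((a j : ℕ) : ZMod e) = ((a' j : ℕ) : ZMod e) := by
          intro j hj
          have e1 := hproj_eq P hPB a hopt hSiff ⟨j, hj⟩
          have e2 := hproj_eq P₀ hP₀B a' hopt' hSiff' ⟨j, hj⟩
          rw [← e1, ← e2, hPβ, hP₀β]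
        have hdvd_e : ∀ j ∈ S, (e : ℤ) ∣ ((a' j : ℤ) - (a j : ℤ)) := by
          intro j hj
          have := (ZMod.natCast_eq_natCast_iff _ _ _).mp (hcongS j hj)
          exact this.dvd
        -- degree equality
        have h1 : u * a i + ∑ j ∈ S, w j * a j = u * a' i + ∑ j ∈ S, w j * a' j := by
          rw [← hdegsplit a hlow hSiff, ← hdegsplit a' hlow' hSiff', hwdeg, hwdeg']
        have h2 : (u : ℤ) * ((a i : ℤ) - (a' i : ℤ))
            = ∑ j ∈ S, (w j : ℤ) * ((a' j : ℤ) - (a j : ℤ)) := by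
          have h1' := congrArg (Nat.cast : ℕ → ℤ) h1
          push_cast at h1'
          simp_rw [mul_sub]
          rw [Finset.sum_sub_distrib]
          linarith [h1']
        -- K with γ ∣ K
        have h3 : (u : ℤ) * ((a i : ℤ) - (a' i : ℤ))
            = (e : ℤ) * ∑ j ∈ S, (w j : ℤ) * (((a' j : ℤ) - (a j : ℤ)) / e) := by
          rw [h2, Finset.mul_sum]
          apply Finset.sum_congr rfl
          intro j hj
          have hc := Int.mul_ediv_cancel' (hdvd_e j hj)
          calc (w j : ℤ) * ((a' j : ℤ) - (a j : ℤ))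
              = (w j : ℤ) * ((e : ℤ) * (((a' j : ℤ) - (a j : ℤ)) / e)) := by rw [hc]
            _ = (e : ℤ) * ((w j : ℤ) * (((a' j : ℤ) - (a j : ℤ)) / e)) := by ring
        have hγK : (γ : ℤ) ∣ ∑ j ∈ S, (w j : ℤ) * (((a' j : ℤ) - (a j : ℤ)) / e) := by
          apply Finset.dvd_sum
          intro j hj
          exact Dvd.dvd.mul_right (Int.natCast_dvd_natCast.mpr (Finset.gcd_dvd hj)) _
        have hdvd := delta_dvd (γ := γ) hu1 h3 hγK
        rw [← hG, ← hx₀] at hdvd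
        obtain ⟨s, hs⟩ := hdvd
        -- membership
        simp only [Finset.mem_coe, Set.Finite.mem_toFinset]
        rw [hhead, hhead']
        rw [SetLike.mem_coe, AddSubgroup.mem_zmultiples_iff]
        refine ⟨s, ?_⟩
        rw [zsmul_eq_mul]
        calc (s : ZMod e) * ((x₀ : ℕ) : ZMod e) = (((x₀ : ℤ) * s : ℤ) : ZMod e) := by
              push_cast; ring
          _ = (((a i : ℤ) - (a' i : ℤ) : ℤ) : ZMod e) := by rw [← hs]
          _ = ((a i : ℕ) : ZMod e) - ((a' i : ℕ) : ZMod e) := by push_cast; ring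
      · -- injective on the fiber
        intro P1 hP1 P2 hP2 hh
        have h12 : P1.1 = P2.1 := by
          have := sub_left_injective hh
          exact this
        have hPB1 : P1 ∈ B := (Finset.mem_filter.mp hP1).1
        have hPβ1 : proj P1 = β := (Finset.mem_filter.mp hP1).2
        have hPB2 : P2 ∈ B := (Finset.mem_filter.mp hP2).1
        have hPβ2 : proj P2 = β := (Finset.mem_filter.mp hP2).2
        obtain ⟨a1, _, _, _, hopt1, hSiff1⟩ := hB P1 hPB1
        obtain ⟨a2, _, _, _, hopt2, hSiff2⟩ := hB P2 hPB2
        have hsnd : P1.2 = P2.2 := by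
          funext j
          by_cases hj : j ∈ S
          · have e1 := hproj_eq P1 hPB1 a1 hopt1 hSiff1 ⟨j, hj⟩
            have e2 := hproj_eq P2 hPB2 a2 hopt2 hSiff2 ⟨j, hj⟩
            rw [hopt1 j, if_pos ((hSiff1 j).mp hj), hopt2 j, if_pos ((hSiff2 j).mp hj)]
            congr 1
            rw [← e1, ← e2, hPβ1, hPβ2]
          · rw [hopt1 j, hopt2 j, if_neg (fun hc => hj ((hSiff1 j).mpr hc)),
              if_neg (fun hc => hj ((hSiff2 j).mpr hc))]
        exact Prod.ext h12 hsnd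
  -- assemble
  calc B.card = ∑ β ∈ B.image proj, (B.filter (fun P => proj P = β)).card :=
        Finset.card_eq_sum_card_image proj B
    _ ≤ ∑ _β ∈ B.image proj, Nat.card (AddSubgroup.zmultiples ((x₀ : ℕ) : ZMod e)) :=
        Finset.sum_le_sum (fun β _ => hfiberbound β)
    _ = (B.image proj).card * Nat.card (AddSubgroup.zmultiples ((x₀ : ℕ) : ZMod e)) := by
        rw [Finset.sum_const, smul_eq_mul]
    _ = (B.image proj).card * Nat.card φ.range := by rw [hHcard]
    _ ≤ e ^ S.card := himg

end Stmt6Count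

namespace Stmt6Main
open Finset Stmt6NT Stmt6Count

variable {F : Type} [Field F] [Fintype F] {m : ℕ} {w : Fin (m + 1) → ℕ}

set_option maxHeartbeats 1000000

lemma ncard_MbarDI_le (hpos : ∀ j, 1 ≤ w j) (d : ℕ) (i : Fin (m + 1)) :
    (MbarDI F w d i).ncard ≤ Fintype.card F ^ (m - (i : ℕ)) := by
  classical
  have hq2 : 1 < Fintype.card F := Fintype.one_lt_card
  set e : ℕ := Fintype.card F - 1 with he
  have hee : 1 ≤ e := by omega
  haveI : NeZero e := ⟨by omega⟩
  set fp : (Fin (m + 1) →₀ ℕ) → (ZMod e × (Fin (m + 1) → Option (ZMod e))) :=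
    fun a => (((a i : ℕ) : ZMod e),
      fun j => if i < j ∧ a j ≠ 0 then some ((a j : ℕ) : ZMod e) else none) with hfp
  have hinj : Set.InjOn fp (MbarDI F w d i) := by
    intro a ha a' ha' hfpeq
    by_contra hne
    apply Stmt6Aux4.not_both_mem ha ha' hne
    intro j
    have hfst : ((a i : ℕ) : ZMod e) = ((a' i : ℕ) : ZMod e) := congrArg Prod.fst hfpeq
    have hsnd : ∀ t : Fin (m + 1),
        (if i < t ∧ a t ≠ 0 then some ((a t : ℕ) : ZMod e) else none)
        = (if i < t ∧ a' t ≠ 0 then some ((a' t : ℕ) : ZMod e) else none) :=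
      fun t => congrFun (congrArg Prod.snd hfpeq) t
    rcases lt_trichotomy j i with h | h | h
    · rw [ha.2.1 j h, ha'.2.1 j h]
      exact ⟨Nat.ModEq.refl 0, Iff.rfl⟩
    · subst h
      refine ⟨(ZMod.natCast_eq_natCast_iff _ _ _).mp hfst, ?_⟩
      have h1 := ha.2.2
      have h2 := ha'.2.2
      constructor
      · intro h0; omega
      · intro h0; omega
    · have hthis := hsnd j
      have hiff : a j = 0 ↔ a' j = 0 := by
        constructor
        · intro h0
          by_contra h0'
          rw [if_neg (fun hc => hc.2 h0), if_pos ⟨h, h0'⟩] at hthis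
          exact nomatch hthis
        · intro h0'
          by_contra h0
          rw [if_pos ⟨h, h0⟩, if_neg (fun hc => hc.2 h0')] at hthis
          exact nomatch hthis
      refine ⟨?_, hiff⟩
      by_cases h0 : a j = 0
      · rw [h0, hiff.mp h0]
      · have h0' : a' j ≠ 0 := fun hc => h0 (hiff.mpr hc)
        rw [if_pos ⟨h, h0⟩, if_pos ⟨h, h0'⟩] at hthis
        exact (ZMod.natCast_eq_natCast_iff _ _ _).mp (Option.some.inj hthis)
  have h1 : (MbarDI F w d i).ncard = (fp '' (MbarDI F w d i)).ncard :=
    (Set.ncard_image_of_injOn hinj).symm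
  set Cell : Set (Fin (m + 1) →₀ ℕ) :=
    {a | wdeg w a = d ∧ (∀ t : Fin (m + 1), t < i → a t = 0)} with hCell
  have hsub : fp '' MbarDI F w d i ⊆ fp '' Cell :=
    Set.image_mono (fun a ha => ⟨ha.1.2, ha.2.1⟩)
  have h2 : (fp '' MbarDI F w d i).ncard ≤ (fp '' Cell).ncard :=
    Set.ncard_le_ncard hsub (Set.toFinite _)
  suffices hmain : (fp '' Cell).ncard ≤ Fintype.card F ^ (m - (i : ℕ)) by
    rw [h1]; exact le_trans h2 hmain
  have hfin : (fp '' Cell).Finite := Set.toFinite _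
  rw [Set.ncard_eq_toFinset_card _ hfin]
  set X := hfin.toFinset with hX
  set T : Finset (Fin (m + 1)) := Finset.Ioi i with hT
  have hTcard : T.card = m - (i : ℕ) := by
    rw [hT, Fin.card_Ioi]
    omega
  set suppOf : (ZMod e × (Fin (m + 1) → Option (ZMod e))) → Finset (Fin (m + 1)) :=
    fun P => Finset.univ.filter (fun j => (P.2 j).isSome) with hsupp
  have hoptiff : ∀ (a : Fin (m + 1) →₀ ℕ) (j : Fin (m + 1)),
      j ∈ suppOf (fp a) ↔ (i < j ∧ a j ≠ 0) := by
    intro a j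
    simp only [hsupp, Finset.mem_filter, Finset.mem_univ, true_and, hfp]
    by_cases hc : i < j ∧ a j ≠ 0
    · simp [hc]
    · simp [hc]
  have hfib : ∀ P ∈ X, suppOf P ∈ T.powerset := by
    intro P hP
    rw [Finset.mem_powerset]
    obtain ⟨a, _, rfl⟩ := (Set.Finite.mem_toFinset hfin).mp hP
    intro j hj
    rw [hT, Finset.mem_Ioi]
    exact ((hoptiff a j).mp hj).1
  rw [Finset.card_eq_sum_card_fiberwise hfib]
  have hperS : ∀ S ∈ T.powerset, (X.filter (fun P => suppOf P = S)).card ≤ e ^ S.card := by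
    intro S _
    apply perS_bound hpos hee S
    intro P hP
    have hPX : P ∈ X := (Finset.mem_filter.mp hP).1
    have hPS : suppOf P = S := (Finset.mem_filter.mp hP).2
    obtain ⟨a, haCell, rfl⟩ := (Set.Finite.mem_toFinset hfin).mp hPX
    refine ⟨a, haCell.1, haCell.2, rfl, fun j => rfl, ?_⟩
    intro j
    rw [← hPS]
    exact hoptiff a j
  have hid : ∑ S ∈ T.powerset, e ^ S.card = (e + 1) ^ T.card := by
    have h := Finset.prod_add (fun _ : Fin (m + 1) => e) (fun _ => (1 : ℕ)) T
    simp only [Finset.prod_const, one_pow, mul_one] at h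
    exact h.symm
  calc ∑ S ∈ T.powerset, (X.filter (fun P => suppOf P = S)).card
      ≤ ∑ S ∈ T.powerset, e ^ S.card := Finset.sum_le_sum hperS
    _ = (e + 1) ^ T.card := hid
    _ = Fintype.card F ^ (m - (i : ℕ)) := by
        rw [hTcard]
        congr 1
        omega

end Stmt6Main
namespace Stmt6Main
open Finset

variable {F : Type} [Field F] [Fintype F] {m : ℕ} {w : Fin (m + 1) → ℕ}

set_option linter.unusedSectionVars false

lemma wdeg_zero : wdeg w 0 = 0 := by simp [wdeg]

lemma finite_MbarD (hpos : ∀ j, 1 ≤ w j) (d : ℕ) : (MbarD F w d).Finite := by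
  classical
  have hb : ∀ a ∈ MbarD F w d, ∀ t, a t ≤ d := by
    intro a ha t
    have h1 : w t * a t ≤ wdeg w a :=
      Finset.single_le_sum (f := fun t => w t * a t) (fun _ _ => Nat.zero_le _)
        (Finset.mem_univ t)
    have h2 : a t ≤ w t * a t := Nat.le_mul_of_pos_left _ (hpos t)
    rw [ha.2] at h1
    omega
  have hsub : MbarD F w d ⊆ Set.Iic (Finsupp.equivFunOnFinite.symm (fun _ => d)) := by
    intro a ha
    rw [Set.mem_Iic]
    intro t
    exact hb a ha t
  exact (Set.finite_Iic _).subset hsub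

lemma partition (hpos : ∀ j, 1 ≤ w j) (d : ℕ) (hd : 1 ≤ d) :
    (MbarD F w d).ncard = ∑ i : Fin (m + 1), (MbarDI F w d i).ncard := by
  classical
  have hfinD : (MbarD F w d).Finite := finite_MbarD hpos d
  have hfinI : ∀ i, (MbarDI F w d i).Finite := fun i => hfinD.subset (fun a ha => ha.1)
  have hne : ∀ a ∈ MbarD F w d, a.support.Nonempty := by
    intro a ha
    rw [Finsupp.support_nonempty_iff]
    intro h0
    rw [h0] at ha
    have := ha.2
    rw [wdeg_zero] at this
    omega
  set fm : (Fin (m + 1) →₀ ℕ) → Fin (m + 1) := fun a =>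
    if h : a.support.Nonempty then a.support.min' h else 0 with hfm
  rw [Set.ncard_eq_toFinset_card _ hfinD]
  rw [Finset.card_eq_sum_card_fiberwise
    (f := fm) (t := Finset.univ) (fun x _ => Finset.mem_univ _)]
  apply Finset.sum_congr rfl
  intro i _
  rw [Set.ncard_eq_toFinset_card _ (hfinI i)]
  congr 1
  ext a
  simp only [Finset.mem_filter, Set.Finite.mem_toFinset]
  constructor
  · rintro ⟨haD, hfa⟩
    have hnea := hne a haD
    simp only [hfm, dif_pos hnea] at hfa
    refine ⟨haD, ?_, ?_⟩
    · intro t ht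
      by_contra h0
      have : t ∈ a.support := Finsupp.mem_support_iff.mpr h0
      have := Finset.min'_le _ _ this
      rw [hfa] at this
      exact absurd (lt_of_lt_of_le ht this) (lt_irrefl t)
    · have : a.support.min' hnea ∈ a.support := Finset.min'_mem _ _
      rw [hfa] at this
      have := Finsupp.mem_support_iff.mp this
      omega
  · rintro ⟨haD, hlow, hpos'⟩
    refine ⟨haD, ?_⟩
    have hnea := hne a haD
    simp only [hfm, dif_pos hnea]
    have hiS : i ∈ a.support := Finsupp.mem_support_iff.mpr (by omega)
    apply le_antisymm
    · exact Finset.min'_le _ _ hiS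
    · by_contra hcon
      push_neg at hcon
      have hmem : a.support.min' hnea ∈ a.support := Finset.min'_mem _ _
      have := Finsupp.mem_support_iff.mp hmem
      exact this (hlow _ hcon)

lemma sum_pow_eq_pSum (q : ℕ) :
    ∑ i : Fin (m + 1), q ^ (m - (i : ℕ)) = pSum q (m + 1) := by
  rw [Fin.sum_univ_eq_sum_range (fun i => q ^ (m - i)) (m + 1), pSum]
  have h := Finset.sum_range_reflect (fun i => q ^ i) (m + 1)
  simp only [Nat.add_sub_cancel] at h
  exact h

end Stmt6Main
/-- Lemma 2.9 of the paper: `d̃ ∈ reg(ℙ(w)(𝔽_q))` iff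
`|M̄_{d̃,i}| = q^{m−i}` for every `i`. -/
theorem stmt6 (F : Type) [Field F] [Fintype F] (m ℓ : ℕ) (w : Fin (m + 1) → ℕ)
    (hℓ1 : 1 ≤ ℓ) (hℓm : ℓ + 1 ≤ m)
    (hpos : ∀ i, 1 ≤ w i)
    (hw0 : w ⟨0, by omega⟩ = 1)
    (hweq : ∀ i : Fin (m + 1), 1 ≤ (i : ℕ) → (i : ℕ) ≤ ℓ → w i = w ⟨1, by omega⟩)
    (hlt : w ⟨ℓ, by omega⟩ < w ⟨ℓ + 1, by omega⟩)
    (hmono : ∀ i j : Fin (m + 1), ℓ + 1 ≤ (i : ℕ) → i ≤ j → w i ≤ w j)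
    (dtil : ℕ) (hdtil : 1 ≤ dtil) :
    dtil ∈ regSet F w ↔
      ∀ i : Fin (m + 1),
        (MbarDI F w dtil i).ncard = Fintype.card F ^ (m - (i : ℕ)) := by
  constructor
  · rintro ⟨_, hcard⟩ i
    have hsum : ∑ j : Fin (m + 1), (MbarDI F w dtil j).ncard
        = ∑ j : Fin (m + 1), Fintype.card F ^ (m - (j : ℕ)) := by
      rw [← Stmt6Main.partition hpos dtil hdtil, hcard,
        ← Stmt6Main.sum_pow_eq_pSum (Fintype.card F)]
    have hbound : ∀ j ∈ Finset.univ, (MbarDI F w dtil j).ncard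
        ≤ Fintype.card F ^ (m - (j : ℕ)) :=
      fun j _ => Stmt6Main.ncard_MbarDI_le hpos dtil j
    exact (Finset.sum_eq_sum_iff_of_le hbound).mp hsum i (Finset.mem_univ i)
  · intro hall
    refine ⟨hdtil, ?_⟩
    rw [Stmt6Main.partition hpos dtil hdtil,
      Finset.sum_congr rfl (fun j _ => hall j)]
    exact Stmt6Main.sum_pow_eq_pSum (Fintype.card F)

end
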